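/- There exists an absolute constant C > 0 such that for every P > 0, every d > 0, every t > 0 and every x ∈ ℝ, the series Σ_{k∈ℤ, k≠0} e^{2πikx/P} e^{−d(2πk/P)² t} / (2πik) converges absolutely and satisfies |Σ_{k∈ℤ, k≠0} e^{2πikx/P} e^{−d(2πk/P)² t} / (2πik)| ≤ C. (This is the uniform-in-period, uniform-in-time L^∞ bound on the P-periodic Fourier series of the error-function-type convolution kernel arising in the critical part of the linear solution operator, with P = NT.) -/

import Mathlib

open Complex MeasureTheory intervalIntegral
open scoped Real


/-- The `k`-th term `e^{2πikx/P} e^{-d(2πk/P)²t} / (2πik)` (zero for `k = 0`) of the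
`P`-periodic Fourier series of the error-function-type convolution kernel. -/
noncomputable def kernTerm (P d t x : ℝ) (k : ℤ) : ℂ :=
  if k = 0 then 0
  else
    Complex.exp (2 * (Real.pi : ℂ) * Complex.I * (k : ℂ) * (x : ℂ) / (P : ℂ)) *
      ((Real.exp (-(d * (2 * Real.pi * (k : ℝ) / P) ^ 2 * t)) : ℝ) : ℂ) /
        (2 * (Real.pi : ℂ) * Complex.I * (k : ℂ))

noncomputable def fTerm (P a : ℝ) (k : ℤ) (x : ℝ) : ℂ :=
  if k = 0 then 0
  else Complex.exp (2 * (Real.pi : ℂ) * Complex.I * (k : ℂ) * (x : ℂ) / (P : ℂ)) *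
      ((Real.exp (-(a * (k : ℝ) ^ 2)) : ℝ) : ℂ) / (2 * (Real.pi : ℂ) * Complex.I * (k : ℂ))

noncomputable def hTerm (P a : ℝ) (k : ℤ) (x : ℝ) : ℂ :=
  if k = 0 then 0
  else Complex.exp (2 * (Real.pi : ℂ) * Complex.I * (k : ℂ) * (x : ℂ) / (P : ℂ)) *
      ((Real.exp (-(a * (k : ℝ) ^ 2)) : ℝ) : ℂ)

lemma summable_w_nat (a : ℝ) (ha : 0 < a) :
    Summable fun n : ℕ => Real.exp (-(a * (n : ℝ) ^ 2)) := by
  have hf : Summable fun n : ℕ => Real.exp (-a) ^ n :=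
    summable_geometric_of_lt_one (Real.exp_pos _).le (Real.exp_lt_one_iff.mpr (by linarith))
  refine Summable.of_nonneg_of_le (fun n => (Real.exp_pos _).le) (fun n => ?_) hf
  rw [← Real.exp_nat_mul]
  apply Real.exp_le_exp.mpr
  have h1 : (n : ℝ) ≤ (n : ℝ) ^ 2 := by
    rcases Nat.eq_zero_or_pos n with h | h
    · simp [h]
    · have : (1 : ℝ) ≤ (n : ℝ) := by exact_mod_cast h
      nlinarith
  nlinarith

lemma summable_w (a : ℝ) (ha : 0 < a) :
    Summable fun k : ℤ => Real.exp (-(a * (k : ℝ) ^ 2)) := by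
  apply Summable.of_nat_of_neg
  · exact_mod_cast summable_w_nat a ha
  · have := summable_w_nat a ha
    apply this.congr
    intro n
    push_cast
    ring_nf

lemma norm_cexp_im (r : ℝ) : ‖Complex.exp ((r : ℂ) * Complex.I)‖ = 1 := by
  rw [Complex.norm_exp_ofReal_mul_I]

lemma exp_arg (P x : ℝ) (k : ℤ) :
    2 * (Real.pi : ℂ) * Complex.I * (k : ℂ) * (x : ℂ) / (P : ℂ) =
      ((2 * Real.pi * (k : ℝ) * x / P : ℝ) : ℂ) * Complex.I := by
  push_cast
  ring

lemma norm_hTerm (P a : ℝ) (k : ℤ) (x : ℝ) :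
    ‖hTerm P a k x‖ ≤ Real.exp (-(a * (k : ℝ) ^ 2)) := by
  unfold hTerm
  split_ifs with h
  · simp; positivity
  · rw [norm_mul, exp_arg, norm_cexp_im, one_mul, Complex.norm_real,
      Real.norm_eq_abs, abs_of_pos (Real.exp_pos _)]

lemma norm_fTerm (P a : ℝ) (k : ℤ) (x : ℝ) :
    ‖fTerm P a k x‖ ≤ Real.exp (-(a * (k : ℝ) ^ 2)) := by
  have h2 : fTerm P a k x = hTerm P a k x / (2 * (Real.pi : ℂ) * Complex.I * (k : ℂ)) := by
    unfold fTerm hTerm; split_ifs <;> simp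
  rw [h2, norm_div]
  rcases eq_or_ne k 0 with h | h
  · simp only [hTerm, if_pos h, norm_zero, zero_div]; positivity
  · have hk : (1 : ℝ) ≤ |(k : ℝ)| := by
      have := Int.one_le_abs (by exact_mod_cast h : k ≠ 0)
      exact_mod_cast this
    have hd : (1 : ℝ) ≤ ‖2 * (Real.pi : ℂ) * Complex.I * (k : ℂ)‖ := by
      simp only [norm_mul, Complex.norm_I, Complex.norm_real, Complex.norm_intCast,
        Complex.norm_ofNat]
      rw [Real.norm_eq_abs, abs_of_pos Real.pi_pos]
      nlinarith [Real.pi_gt_three]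
    calc ‖hTerm P a k x‖ / ‖2 * (Real.pi : ℂ) * Complex.I * (k : ℂ)‖
        ≤ ‖hTerm P a k x‖ := div_le_self (norm_nonneg _) hd
      _ ≤ _ := norm_hTerm P a k x

lemma fTerm_hasDerivAt (P a : ℝ) (hP : P ≠ 0) (k : ℤ) (x : ℝ) :
    HasDerivAt (fun y => fTerm P a k y) (hTerm P a k x / P) x := by
  rcases eq_or_ne k 0 with h | h
  · simp only [fTerm, hTerm, if_pos h, zero_div]
    exact hasDerivAt_const x 0
  · have hπ : (Real.pi : ℂ) ≠ 0 := by exact_mod_cast Real.pi_ne_zero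
    have hk : (k : ℂ) ≠ 0 := by exact_mod_cast h
    have hPc : (P : ℂ) ≠ 0 := by exact_mod_cast hP
    set c : ℂ := 2 * (Real.pi : ℂ) * Complex.I * (k : ℂ) / (P : ℂ) with hc
    set w : ℂ := ((Real.exp (-(a * (k : ℝ) ^ 2)) : ℝ) : ℂ) with hw
    set D : ℂ := 2 * (Real.pi : ℂ) * Complex.I * (k : ℂ) with hD
    have hfun : (fun y : ℝ => fTerm P a k y) = fun y : ℝ => Complex.exp (c * y) * w / D := by
      funext y
      simp only [fTerm, if_neg h, hc, hw, hD]
      ring_nf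
    have h1 : HasDerivAt (fun y : ℝ => Complex.exp (c * y)) (Complex.exp (c * x) * c) x := by
      have h0 : HasDerivAt (fun y : ℝ => (y : ℂ)) 1 x := by
        simpa using (hasDerivAt_id x).ofReal_comp
      simpa using (h0.const_mul c).cexp
    rw [hfun]
    have h2 := ((h1.mul_const w).div_const D)
    convert h2 using 1
    rfl
    simp only [hTerm, if_neg h, hc, hD, hw]
    have hDne : D ≠ 0 := by
      simp only [hD]
      refine mul_ne_zero (mul_ne_zero (mul_ne_zero two_ne_zero hπ) Complex.I_ne_zero) hk
    rw [hc, hD] at *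
    field_simp


noncomputable def Fker (P a : ℝ) (x : ℝ) : ℂ := ∑' k : ℤ, fTerm P a k x

noncomputable def Hker (P a : ℝ) (x : ℝ) : ℂ := ∑' k : ℤ, hTerm P a k x

lemma summable_fTerm (P a : ℝ) (ha : 0 < a) (x : ℝ) :
    Summable fun k : ℤ => fTerm P a k x :=
  Summable.of_norm <| Summable.of_nonneg_of_le (fun _ => norm_nonneg _)
    (fun k => norm_fTerm P a k x) (summable_w a ha)

lemma summable_hTerm (P a : ℝ) (ha : 0 < a) (x : ℝ) :
    Summable fun k : ℤ => hTerm P a k x :=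
  Summable.of_norm <| Summable.of_nonneg_of_le (fun _ => norm_nonneg _)
    (fun k => norm_hTerm P a k x) (summable_w a ha)

lemma hasDerivAt_Fker (P a : ℝ) (hP : 0 < P) (ha : 0 < a) (x : ℝ) :
    HasDerivAt (Fker P a) (Hker P a x / P) x := by
  have h := hasDerivAt_tsum (g := fun (k : ℤ) (y : ℝ) => fTerm P a k y)
    (g' := fun (k : ℤ) (y : ℝ) => hTerm P a k y / P)
    (u := fun k : ℤ => Real.exp (-(a * (k : ℝ) ^ 2)) / P)
    ((summable_w a ha).div_const P)
    (fun k y => fTerm_hasDerivAt P a hP.ne' k y)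
    (fun k y => by
      rw [norm_div, Complex.norm_real, Real.norm_eq_abs, abs_of_pos hP]
      exact (div_le_div_iff_of_pos_right hP).mpr (norm_hTerm P a k y))
    (summable_fTerm P a ha 0) x
  have heq : (∑' k : ℤ, hTerm P a k x / (P : ℂ)) = Hker P a x / P := by
    rw [Hker, tsum_div_const]
  rw [heq] at h
  exact h

lemma continuous_Hker (P a : ℝ) (ha : 0 < a) : Continuous (Hker P a) := by
  apply continuous_tsum (u := fun k : ℤ => Real.exp (-(a * (k : ℝ) ^ 2)))
    ?_ (summable_w a ha) (fun k y => norm_hTerm P a k y)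
  intro k
  unfold hTerm
  split_ifs with h
  · exact continuous_const
  · apply Continuous.mul ?_ continuous_const
    apply Complex.continuous_exp.comp
    have : Continuous fun y : ℝ => (y : ℂ) := Complex.continuous_ofReal
    continuity

lemma Fker_zero (P a : ℝ) (ha : 0 < a) : Fker P a 0 = 0 := by
  have h1 : Fker P a 0 = ∑' k : ℤ, fTerm P a (-k) 0 := by
    rw [Fker, ← (Equiv.neg ℤ).tsum_eq (fun k => fTerm P a k 0)]
    rfl
  have h2 : ∀ k : ℤ, fTerm P a (-k) 0 = -fTerm P a k 0 := by
    intro k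
    rcases eq_or_ne k 0 with h | h
    · simp [fTerm, h]
    · simp only [fTerm, if_neg h, if_neg (neg_ne_zero.mpr h), Int.cast_neg,
        Complex.ofReal_zero, mul_zero, zero_div, Complex.exp_zero, one_mul, neg_sq]
      ring
  have h3 : Fker P a 0 = -Fker P a 0 := by
    conv_lhs => rw [h1]
    simp_rw [h2]
    rw [tsum_neg]
    rfl
  linear_combination h3 / 2

lemma Fker_periodic (P a : ℝ) (hP : P ≠ 0) : Function.Periodic (Fker P a) P := by
  intro x
  apply tsum_congr
  intro k
  rcases eq_or_ne k 0 with h | h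
  · simp [fTerm, h]
  · have hPc : (P : ℂ) ≠ 0 := by exact_mod_cast hP
    simp only [fTerm, if_neg h]
    congr 1
    congr 1
    rw [show 2 * (Real.pi : ℂ) * Complex.I * (k : ℂ) * ((x + P : ℝ) : ℂ) / (P : ℂ) =
      2 * (Real.pi : ℂ) * Complex.I * (k : ℂ) * (x : ℂ) / (P : ℂ) +
        (k : ℂ) * (2 * (Real.pi : ℂ) * Complex.I) by push_cast; field_simp]
    rw [Complex.exp_add, Complex.exp_int_mul_two_pi_mul_I, mul_one]

noncomputable def gker (P a : ℝ) (y : ℝ) : ℝ :=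
  (1 / (a / Real.pi) ^ ((1 : ℝ) / 2)) *
    ∑' n : ℤ, Real.exp (-(Real.pi ^ 2 / a) * ((n : ℝ) - y / P) ^ 2)

lemma gker_nonneg (P a : ℝ) (ha : 0 < a) (y : ℝ) : 0 ≤ gker P a y := by
  have h1 : (0:ℝ) < a / Real.pi := div_pos ha Real.pi_pos
  exact mul_nonneg (by positivity) (tsum_nonneg fun n => (Real.exp_pos _).le)

lemma Hker_eq (P a : ℝ) (ha : 0 < a) (y : ℝ) :
    Hker P a y = ((gker P a y - 1 : ℝ) : ℂ) := by
  have hπ : Real.pi ≠ 0 := Real.pi_ne_zero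
  have hπc : (Real.pi : ℂ) ≠ 0 := by exact_mod_cast hπ
  have haπ : (0:ℝ) < a / Real.pi := div_pos ha Real.pi_pos
  have hre : (0:ℝ) < (((a / Real.pi : ℝ) : ℂ)).re := by simpa using haπ
  have key := Complex.tsum_exp_neg_quadratic (a := ((a / Real.pi : ℝ) : ℂ)) hre
    (Complex.I * ((y / P : ℝ) : ℂ))
  -- rewrite LHS of key
  have hL : (∑' n : ℤ, Complex.exp (-(Real.pi:ℂ) * ((a / Real.pi : ℝ) : ℂ) * (n:ℂ) ^ 2 +
      2 * (Real.pi:ℂ) * (Complex.I * ((y / P : ℝ) : ℂ)) * (n:ℂ))) = Hker P a y + 1 := by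
    have hterm : ∀ n : ℤ, Complex.exp (-(Real.pi:ℂ) * ((a / Real.pi : ℝ) : ℂ) * (n:ℂ) ^ 2 +
        2 * (Real.pi:ℂ) * (Complex.I * ((y / P : ℝ) : ℂ)) * (n:ℂ)) =
        hTerm P a n y + (if n = 0 then 1 else 0) := by
      intro n
      rcases eq_or_ne n 0 with h | h
      · simp [hTerm, h]
      · rw [if_neg h, add_zero]
        simp only [hTerm, if_neg h]
        rw [show (-(Real.pi:ℂ) * ((a / Real.pi : ℝ) : ℂ) * (n:ℂ) ^ 2 +
            2 * (Real.pi:ℂ) * (Complex.I * ((y / P : ℝ) : ℂ)) * (n:ℂ)) =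
            2 * (Real.pi : ℂ) * Complex.I * (n : ℂ) * ((y:ℝ) : ℂ) / ((P:ℝ) : ℂ) +
              ((-(a * (n:ℝ)^2) : ℝ) : ℂ) by push_cast; field_simp; ring]
        rw [Complex.exp_add, Complex.ofReal_exp]
    rw [tsum_congr hterm, Summable.tsum_add (summable_hTerm P a ha y)
      ((hasSum_ite_eq (0:ℤ) (1:ℂ)).summable), tsum_ite_eq]
    rfl
  -- rewrite RHS of key
  have hR : (1 / (((a / Real.pi : ℝ) : ℂ)) ^ ((1:ℂ)/2) *
      ∑' n : ℤ, Complex.exp (-(Real.pi:ℂ) / ((a / Real.pi : ℝ) : ℂ) *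
        ((n:ℂ) + Complex.I * (Complex.I * ((y / P : ℝ) : ℂ))) ^ 2)) = ((gker P a y : ℝ) : ℂ) := by
    have hterm : ∀ n : ℤ, Complex.exp (-(Real.pi:ℂ) / ((a / Real.pi : ℝ) : ℂ) *
        ((n:ℂ) + Complex.I * (Complex.I * ((y / P : ℝ) : ℂ))) ^ 2) =
        ((Real.exp (-(Real.pi ^ 2 / a) * ((n : ℝ) - y / P) ^ 2) : ℝ) : ℂ) := by
      intro n
      rw [Complex.ofReal_exp]
      congr 1
      have hI : Complex.I * (Complex.I * ((y / P : ℝ) : ℂ)) = -((y / P : ℝ) : ℂ) := by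
        rw [← mul_assoc, Complex.I_mul_I, neg_one_mul]
      rw [hI]
      push_cast
      field_simp
      ring
    rw [tsum_congr hterm, ← Complex.ofReal_tsum]
    rw [show (((a / Real.pi : ℝ) : ℂ)) ^ ((1:ℂ)/2) =
        (((a / Real.pi) ^ ((1:ℝ)/2) : ℝ) : ℂ) by
      rw [Complex.ofReal_cpow haπ.le]; norm_num]
    rw [gker]
    push_cast
    ring
  rw [hL, hR] at key
  rw [Complex.ofReal_sub, Complex.ofReal_one, ← key]
  ring

lemma continuous_gker (P a : ℝ) (ha : 0 < a) : Continuous (gker P a) := by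
  have h : ∀ y, gker P a y = (Hker P a y).re + 1 := by
    intro y
    rw [Hker_eq P a ha y]
    simp
  simp_rw [funext h]
  exact (Complex.continuous_re.comp (continuous_Hker P a ha)).add continuous_const

lemma Fker_bound (P a : ℝ) (hP : 0 < P) (ha : 0 < a) (x : ℝ) : ‖Fker P a x‖ ≤ 2 := by
  obtain ⟨y, hy, hxy⟩ := (Fker_periodic P a hP.ne').exists_mem_Ico₀ hP x
  rw [hxy]
  obtain ⟨hy0, hyP⟩ := hy
  set g : ℝ → ℝ := fun s => gker P a s with hg
  have hgc : Continuous g := continuous_gker P a ha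
  have hgm1c : Continuous fun s => g s - 1 := hgc.sub continuous_const
  have hHc : Continuous (Hker P a) := continuous_Hker P a ha
  -- FTC
  have ftc : ∀ z : ℝ, (∫ s in (0:ℝ)..z, Hker P a s / P) = Fker P a z := by
    intro z
    rw [intervalIntegral.integral_eq_sub_of_hasDerivAt
      (fun s _ => hasDerivAt_Fker P a hP ha s)
      ((hHc.div_const _).intervalIntegrable 0 z)]
    rw [Fker_zero P a ha, sub_zero]
  -- real form
  have hHre : ∀ z : ℝ, (∫ s in (0:ℝ)..z, Hker P a s) = ((∫ s in (0:ℝ)..z, (g s - 1) : ℝ) : ℂ) := by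
    intro z
    rw [show (fun s => Hker P a s) = fun s => (((g s - 1 : ℝ)) : ℂ) from
      funext fun s => Hker_eq P a ha s]
    exact intervalIntegral.integral_ofReal
  have hFz : ∀ z : ℝ, Fker P a z = ((∫ s in (0:ℝ)..z, (g s - 1) : ℝ) : ℂ) / P := by
    intro z
    rw [← ftc z, intervalIntegral.integral_div, hHre z]
  -- total mass : ∫_0^P (g - 1) = 0
  have hFP : Fker P a P = 0 := by
    have := (Fker_periodic P a hP.ne') 0
    rw [zero_add, Fker_zero P a ha] at this
    exact this
  have hmass : (∫ s in (0:ℝ)..P, (g s - 1)) = 0 := by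
    have h1 := hFz P
    rw [hFP] at h1
    have hPc : (P : ℂ) ≠ 0 := by exact_mod_cast hP.ne'
    field_simp at h1
    simpa using h1.symm
  have hmass2 : (∫ s in (0:ℝ)..P, (g s + 1)) = 2 * P := by
    have e1 : (∫ s in (0:ℝ)..P, (g s + 1)) =
        (∫ s in (0:ℝ)..P, (g s - 1)) + ∫ s in (0:ℝ)..P, (2:ℝ) := by
      rw [← intervalIntegral.integral_add (hgm1c.intervalIntegrable 0 P)
        (intervalIntegrable_const)]
      congr 1
      funext s
      ring
    rw [e1, hmass, intervalIntegral.integral_const, zero_add]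
    simp [mul_comm]
  -- bound
  rw [hFz y, norm_div, Complex.norm_real, Complex.norm_real, Real.norm_eq_abs,
    Real.norm_eq_abs, abs_of_pos hP]
  have hb1 : |∫ s in (0:ℝ)..y, (g s - 1)| ≤ ∫ s in (0:ℝ)..y, |g s - 1| :=
    intervalIntegral.abs_integral_le_integral_abs hy0
  have hb2 : (∫ s in (0:ℝ)..y, |g s - 1|) ≤ ∫ s in (0:ℝ)..y, (g s + 1) := by
    apply intervalIntegral.integral_mono_on hy0
      (hgm1c.abs.intervalIntegrable 0 y)
      ((hgc.add continuous_const).intervalIntegrable 0 y)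
    intro s _
    have := gker_nonneg P a ha s
    rw [abs_sub_comm]
    rw [abs_le]
    constructor <;> simp only [hg, Pi.add_apply] <;> nlinarith [abs_nonneg (g s - 1)]
  have hb3 : (∫ s in (0:ℝ)..y, (g s + 1)) ≤ ∫ s in (0:ℝ)..P, (g s + 1) := by
    apply intervalIntegral.integral_mono_interval le_rfl hy0 hyP.le
    · filter_upwards with s
      have := gker_nonneg P a ha s
      simp only [Pi.zero_apply]
      simp only [hg]
      linarith
    · exact (hgc.add continuous_const).intervalIntegrable 0 P
  calc |∫ s in (0:ℝ)..y, (g s - 1)| / P ≤ (2 * P) / P := by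
        gcongr
        linarith [hb1, hb2, hb3, hmass2]
    _ = 2 := by field_simp

/-- Uniform-in-period, uniform-in-time `L^∞` bound on the periodic error-function kernel:
the series converges absolutely and its sum is bounded by an absolute constant `C`. -/
theorem uniform_kernel_bound :
    ∃ C : ℝ, 0 < C ∧
      ∀ P : ℝ, 0 < P → ∀ d : ℝ, 0 < d → ∀ t : ℝ, 0 < t → ∀ x : ℝ,
        Summable (fun k : ℤ => ‖kernTerm P d t x k‖) ∧
          ‖∑' k : ℤ, kernTerm P d t x k‖ ≤ C := by
  refine ⟨2, two_pos, fun P hP d hd t ht x => ?_⟩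
  set a : ℝ := d * (2 * Real.pi / P) ^ 2 * t with ha_def
  have hπ := Real.pi_pos
  have ha : 0 < a := by positivity
  have hk : ∀ k : ℤ, kernTerm P d t x k = fTerm P a k x := by
    intro k
    rcases eq_or_ne k 0 with h | h
    · simp [kernTerm, fTerm, h]
    · simp only [kernTerm, fTerm, if_neg h]
      rw [show -(d * (2 * Real.pi * (k:ℝ) / P) ^ 2 * t) = -(a * (k:ℝ)^2) by
        rw [ha_def]; ring]
  constructor
  · apply Summable.of_nonneg_of_le (fun k => norm_nonneg _) (fun k => ?_) (summable_w a ha)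
    rw [hk k]
    exact norm_fTerm P a k x
  · rw [tsum_congr hk]
    exact Fker_bound P a hP ha x
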